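/- Let E ⊆ ℕ × ℕ have the 3 of 4 property. If matrix units E_{ij}, E_{kl}, E_{mn} are supported in E (i.e., (i,j), (k,l), (m,n) ∈ E) and the operator product E_{ij} E_{kl}* E_{mn} is nonzero, then it equals E_{in} and (i,n) ∈ E. -/

import Mathlib

noncomputable section

/-- `ℓ²(ℕ)`. -/
abbrev H2 : Type := lp (fun _ : ℕ => ℂ) 2

/-- The standard basis vectors of `ℓ²(ℕ)`. -/
def e (i : ℕ) : H2 := lp.single 2 i 1

/-- The `(i,j)` matrix entry of a bounded operator on `ℓ²(ℕ)`. -/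
def entry (X : H2 →L[ℂ] H2) (i j : ℕ) : ℂ := inner ℂ (e i) (X (e j))

open Classical in
/-- The characteristic function `χ_E` of a set `E ⊆ ℕ × ℕ`. -/
def chi (E : Set (ℕ × ℕ)) (i j : ℕ) : ℂ := if (i, j) ∈ E then 1 else 0
/-- The matrix unit `E_{ij}` in `B(ℓ²)`, sending `e_j` to `e_i`. -/
def mUnit (i j : ℕ) : H2 →L[ℂ] H2 := (innerSL ℂ (e j)).smulRight (e i)

/-- The "3 of 4 property". -/
def ThreeOfFour {X Y : Type*} (E : Set (X × Y)) : Prop :=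
  ∀ ⦃x₁ x₂ : X⦄ ⦃y₁ y₂ : Y⦄, x₁ ≠ x₂ → y₁ ≠ y₂ →
    (((x₁, y₁) ∈ E ∧ (x₁, y₂) ∈ E ∧ (x₂, y₁) ∈ E) → (x₂, y₂) ∈ E) ∧
    (((x₁, y₁) ∈ E ∧ (x₁, y₂) ∈ E ∧ (x₂, y₂) ∈ E) → (x₂, y₁) ∈ E) ∧
    (((x₁, y₁) ∈ E ∧ (x₂, y₁) ∈ E ∧ (x₂, y₂) ∈ E) → (x₁, y₂) ∈ E) ∧
    (((x₁, y₂) ∈ E ∧ (x₂, y₁) ∈ E ∧ (x₂, y₂) ∈ E) → (x₁, y₁) ∈ E)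

lemma mUnit_apply (i j : ℕ) (x : H2) : mUnit i j x = (inner ℂ (e j) x : ℂ) • e i := rfl

lemma inner_e (i j : ℕ) : (inner ℂ (e i) (e j) : ℂ) = if i = j then 1 else 0 := by
  rw [e, e, lp.inner_single_left]
  rcases eq_or_ne i j with h | h
  · subst h; simp [lp.single_apply_self]
  · simp [lp.single_apply_ne 2 j _ h, h]

lemma adjoint_mUnit (k l : ℕ) : ContinuousLinearMap.adjoint (mUnit k l) = mUnit l k := by
  refine ContinuousLinearMap.ext fun x => ?_
  refine ext_inner_left ℂ fun y => ?_
  rw [ContinuousLinearMap.adjoint_inner_right, mUnit_apply, mUnit_apply,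
    inner_smul_right, inner_smul_left, inner_conj_symm]
  ring

lemma triple (i j l k m n : ℕ) :
    mUnit i j ∘L mUnit l k ∘L mUnit m n
      = ((inner ℂ (e j) (e l) : ℂ) * (inner ℂ (e k) (e m) : ℂ)) • mUnit i n := by
  refine ContinuousLinearMap.ext fun x => ?_
  simp only [ContinuousLinearMap.comp_apply, mUnit_apply, ContinuousLinearMap.smul_apply,
    inner_smul_right, smul_smul]
  congr 1
  ring

/-- If `E` has the 3 of 4 property, matrix units `E_{ij}, E_{kl}, E_{mn}` are supported in
`E`, and the product `E_{ij} E_{kl}* E_{mn}` is nonzero, then it equals `E_{in}` and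
`(i,n) ∈ E`. -/
theorem matrix_unit_triple_product (E : Set (ℕ × ℕ)) (hE : ThreeOfFour E)
    (i j k l m n : ℕ) (hij : (i, j) ∈ E) (hkl : (k, l) ∈ E) (hmn : (m, n) ∈ E)
    (hne : mUnit i j ∘L (ContinuousLinearMap.adjoint (mUnit k l)) ∘L mUnit m n ≠ 0) :
    mUnit i j ∘L (ContinuousLinearMap.adjoint (mUnit k l)) ∘L mUnit m n = mUnit i n ∧
      (i, n) ∈ E := by
  rw [adjoint_mUnit] at hne ⊢
  have hjl : j = l := by
    by_contra h
    exact hne (by rw [triple, inner_e]; simp [h])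
  have hkm : k = m := by
    by_contra h
    exact hne (by rw [triple, inner_e k m]; simp [h])
  subst hjl; subst hkm
  refine ⟨by rw [triple, inner_e, inner_e]; simp, ?_⟩
  rcases eq_or_ne i k with rfl | hik
  · exact hmn
  rcases eq_or_ne j n with rfl | hjn
  · exact hij
  exact (hE hik hjn).2.2.1 ⟨hij, hkl, hmn⟩
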